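/- Fix Q > 0 and T > 0, and define the threshold η_th = (2^{Q/T} − 1)/(2^{Q/T}·(ln 2)·(Q/T)). If η ∈ [η_th, 1], then the function g_η(ρ) = (2^{Q/((1-ρ)T)} − 1)/(ρ/(1-ρ) + η) satisfies g_η(0) ≤ g_η(ρ) for all ρ ∈ [0, 1); i.e., the optimal save-ratio for outage minimization with zero circuit power is ρ* = 0. -/

import Mathlib

open Real Set

/-- Fix `Q > 0` and `T > 0`, and let `η_th = (2^{Q/T} − 1)/(2^{Q/T}·(ln 2)·(Q/T))`.
If the battery efficiency satisfies `η ∈ [η_th, 1]`, then the outage threshold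
`g_η(ρ) = (2^{Q/((1-ρ)T)} − 1)/(ρ/(1-ρ) + η)` satisfies `g_η(0) ≤ g_η(ρ)` for all
`ρ ∈ [0, 1)`; i.e., the optimal save-ratio with zero circuit power is `ρ* = 0`. -/
theorem optimal_save_ratio_zero_above_threshold (Q T η : ℝ) (hQ : 0 < Q) (hT : 0 < T)
    (hη_lo : ((2 : ℝ) ^ (Q / T) - 1) / ((2 : ℝ) ^ (Q / T) * Real.log 2 * (Q / T)) ≤ η)
    (hη_hi : η ≤ 1) :
    ∀ ρ ∈ Set.Ico (0 : ℝ) 1,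
      ((2 : ℝ) ^ (Q / ((1 - (0 : ℝ)) * T)) - 1) / ((0 : ℝ) / (1 - (0 : ℝ)) + η) ≤
        ((2 : ℝ) ^ (Q / ((1 - ρ) * T)) - 1) / (ρ / (1 - ρ) + η) := by
  intro ρ hρ
  obtain ⟨hρ0, hρ1⟩ := hρ
  set a := Q / T with ha
  have ha0 : 0 < a := div_pos hQ hT
  have h2a0 : (0:ℝ) < (2:ℝ) ^ a := Real.rpow_pos_of_pos (by norm_num) a
  have h2a : (1:ℝ) < (2:ℝ) ^ a :=
    Real.one_lt_rpow_iff_of_pos (by norm_num) |>.2 (Or.inl ⟨by norm_num, ha0⟩)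
  have hlog2 : 0 < Real.log 2 := Real.log_pos (by norm_num)
  have hden : 0 < (2:ℝ) ^ a * Real.log 2 * a := by positivity
  have hkey : (2:ℝ) ^ a - 1 ≤ η * ((2:ℝ) ^ a * Real.log 2 * a) := by
    have := (div_le_iff₀ hden).1 hη_lo
    linarith
  have hη0 : 0 < η := lt_of_lt_of_le (div_pos (by linarith) hden) hη_lo
  have hu : 0 < 1 - ρ := by linarith
  set s := 1 / (1 - ρ) with hs
  have hs0 : 0 < s := by positivity
  have hs1 : 1 ≤ s := by
    rw [hs, le_div_iff₀ hu]; linarith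
  have hexp : Q / ((1 - ρ) * T) = a * s := by
    field_simp [ha, hs]; rw [ha, hs]; field_simp
  have hρu : ρ / (1 - ρ) = s - 1 := by
    field_simp [hs]
    rw [hs]; field_simp; ring
  have h2as : (2:ℝ) ^ a * (1 + (s - 1) * (Real.log 2 * a)) ≤ (2:ℝ) ^ (a * s) := by
    have h1 : (2:ℝ) ^ (a * s) = (2:ℝ) ^ a * (2:ℝ) ^ (a * (s - 1)) := by
      rw [← Real.rpow_add (by norm_num : (0:ℝ) < 2)]; ring_nf
    have h2 : (2:ℝ) ^ (a * (s - 1)) = Real.exp ((s - 1) * (Real.log 2 * a)) := by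
      rw [Real.rpow_def_of_pos (by norm_num : (0:ℝ) < 2)]; ring_nf
    have h3 : 1 + (s - 1) * (Real.log 2 * a) ≤ Real.exp ((s - 1) * (Real.log 2 * a)) :=
      by linarith [Real.add_one_le_exp ((s - 1) * (Real.log 2 * a))]
    rw [h1, h2]
    nlinarith
  have hnum : ((2:ℝ) ^ a - 1) * (s - 1 + η) ≤ ((2:ℝ) ^ (a * s) - 1) * η := by
    nlinarith [mul_nonneg (sub_nonneg.2 hs1) (sub_nonneg.2 hkey),
      mul_le_mul_of_nonneg_left h2as hη0.le]
  have hQT0 : Q / ((1 - (0:ℝ)) * T) = a := by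
    rw [ha]; norm_num
  rw [hQT0, hρu, hexp]
  have hd2 : 0 < s - 1 + η := by linarith
  rw [show (0:ℝ) / (1 - (0:ℝ)) + η = η by norm_num]
  rw [div_le_div_iff₀ hη0 hd2]
  nlinarith
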